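/- Assuming that initial segments of lexicographic order minimize edge-boundary in S(n,m), the bisection width of S(n,m), i.e. the minimum edge-boundary of a set of ⌊m^n/2⌋ vertices, equals m²/4 if m is even, and n·⌊m/2⌋² + ⌊m/2⌋ if m is odd. Equivalently, B(n, ⌊m^n/2⌋) = m²/4 for m even, and B(n, ⌊m^n/2⌋) = n·⌊m/2⌋² + ⌊m/2⌋ for m odd, for all n ≥ 1. -/

import Mathlib

/-- `q n m ℓ = 1 + ⌊(ℓ-1)(m-1)/(mⁿ-1)⌋` for `ℓ ≥ 1`, and `q n m 0 = 0`. -/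
def q (n m ℓ : ℕ) : ℕ := if ℓ = 0 then 0 else 1 + (ℓ - 1) * (m - 1) / (m ^ n - 1)

/-- Recurrence for the edge-boundary of the initial lexicographic segment in `S(n,m)`. -/
def B (m : ℕ) : ℕ → ℕ → ℤ
  | 0, _ => 0
  | n + 1, ℓ =>
    ((ℓ / m ^ n : ℕ) : ℤ) * ((m : ℤ) - (ℓ / m ^ n : ℕ)) + B m n (ℓ % m ^ n) +
      (if q n m (ℓ % m ^ n) ≤ ℓ / m ^ n then -(q n m (ℓ % m ^ n) : ℤ)
       else (q n m (ℓ % m ^ n) : ℤ) - 2 * ((ℓ / m ^ n : ℕ) : ℤ))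

lemma B_zero (m : ℕ) : ∀ n, B m n 0 = 0 := by
  intro n
  induction n with
  | zero => rfl
  | succ k ih => simp [B, q, ih]

lemma q_half (n m : ℕ) (hn : 1 ≤ n) (hm : 3 ≤ m) (hodd : Odd m) :
    q n m (m ^ n / 2) = m / 2 := by
  have hpn : Odd (m ^ n) := hodd.pow
  obtain ⟨t, hmt⟩ := hodd
  have ht : 1 ≤ t := by omega
  obtain ⟨s, hs⟩ := hpn
  have hsge : m ≤ m ^ n := Nat.le_self_pow (by omega) m
  have hst : t ≤ s := by omega
  have hdiv : m ^ n / 2 = s := by omega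
  rw [hdiv]
  have hs0 : s ≠ 0 := by omega
  rw [q, if_neg hs0]
  have hm1 : m - 1 = 2 * t := by omega
  have hN : m ^ n - 1 = 2 * s := by omega
  rw [hm1, hN]
  have key : (s - 1) * (2 * t) = 2 * s * (t - 1) + (2 * s - 2 * t) := by
    obtain ⟨s', rfl⟩ : ∃ s', s = s' + 1 := ⟨s - 1, by omega⟩
    obtain ⟨t', rfl⟩ : ∃ t', t = t' + 1 := ⟨t - 1, by omega⟩
    simp only [Nat.add_sub_cancel]
    rw [show 2 * (s' + 1) - 2 * (t' + 1) = 2 * s' - 2 * t' from by omega]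
    zify [show 2 * t' ≤ 2 * s' from by omega]
    ring
  rw [key, Nat.mul_add_div (by omega : 0 < 2 * s), Nat.div_eq_of_lt (by omega)]
  omega

lemma even_main (m u n : ℕ) (hu : 1 ≤ u) (hm : m = 2 * u) :
    B m (n + 1) (m ^ (n + 1) / 2) = (u : ℤ) ^ 2 := by
  have hpow : m ^ (n + 1) / 2 = u * m ^ n := by
    have h : m ^ (n + 1) = 2 * (u * m ^ n) := by rw [pow_succ, hm]; ring
    rw [h, Nat.mul_div_cancel_left _ (by omega)]
  have hp : 0 < m ^ n := Nat.pow_pos (by omega)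
  have hdivk : u * m ^ n / m ^ n = u := Nat.mul_div_cancel _ hp
  have hmod : u * m ^ n % m ^ n = 0 := Nat.mul_mod_left _ _
  rw [B, hpow, hdivk, hmod, B_zero]
  have hq : q n m 0 = 0 := by simp [q]
  rw [hq, if_pos (by omega)]
  push_cast
  rw [hm]
  push_cast
  ring

lemma odd_main (m t : ℕ) (ht : 1 ≤ t) (hm : m = 2 * t + 1) :
    ∀ n, 1 ≤ n → B m n (m ^ n / 2) = (n : ℤ) * (t : ℤ) ^ 2 + (t : ℤ) := by
  intro n
  induction n with
  | zero => intro h; exact absurd h (by omega)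
  | succ k ih =>
    intro _
    have hp : 0 < m ^ k := Nat.pow_pos (by omega)
    have hpow : m ^ (k + 1) / 2 = m ^ k / 2 + m ^ k * t := by
      rw [pow_succ]
      have : m ^ k * m = 2 * (m ^ k * t) + m ^ k := by rw [hm]; ring
      rw [this, Nat.add_comm, Nat.add_mul_div_left _ _ (by omega : 0 < 2)]
    have hlt : m ^ k / 2 < m ^ k := Nat.div_lt_self hp (by omega)
    have hdivk : (m ^ k / 2 + m ^ k * t) / m ^ k = t := by
      rw [Nat.add_mul_div_left _ _ hp, Nat.div_eq_of_lt hlt]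
      omega
    have hmod : (m ^ k / 2 + m ^ k * t) % m ^ k = m ^ k / 2 := by
      rw [Nat.add_mul_mod_self_left, Nat.mod_eq_of_lt hlt]
    rw [B, hpow, hdivk, hmod]
    rcases Nat.eq_zero_or_pos k with hk | hk
    · subst hk
      simp only [pow_zero]
      have h1 : (1 : ℕ) / 2 = 0 := by norm_num
      rw [h1, B_zero]
      have hq : q 0 m 0 = 0 := by simp [q]
      rw [hq, if_pos (by omega)]
      push_cast [hm]
      ring
    · have hq : q k m (m ^ k / 2) = t := by
        rw [q_half k m hk (by omega) (by rw [hm]; exact ⟨t, by ring⟩)]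
        omega
      rw [hq, if_pos le_rfl, ih hk]
      push_cast [hm]
      ring

theorem stmt18 (n m : ℕ) (hn : 1 ≤ n) (hm : 2 ≤ m) :
    (Even m → B m n (m ^ n / 2) = ((m / 2 : ℕ) : ℤ) ^ 2) ∧
    (Odd m → B m n (m ^ n / 2)
      = (n : ℤ) * ((m / 2 : ℕ) : ℤ) ^ 2 + ((m / 2 : ℕ) : ℤ)) := by
  constructor
  · intro he
    obtain ⟨u, hu⟩ := he
    obtain ⟨k, rfl⟩ : ∃ k, n = k + 1 := ⟨n - 1, by omega⟩
    have h2 : m / 2 = u := by omega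
    rw [h2, even_main m u k (by omega) (by omega)]
  · intro ho
    obtain ⟨t, htm⟩ := ho
    have h2 : m / 2 = t := by omega
    rw [h2, odd_main m t (by omega) (by omega) n hn]
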